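/- Let X and Y be Banach spaces. If u ∈ NA_π(X⊗̂_πY) is witnessed by the series u = Σ_{n=1}^∞ a_n x_n⊗y_n with (x_n,y_n) ∈ B_X×B_Y, a_n ≥ 0 and Σ_{n=1}^∞ a_n = ‖u‖_π, then for any choice of coefficients a'_n ∈ [0, a_n], the tensor u' = Σ_{n=1}^∞ a'_n x_n⊗y_n also belongs to NA_π(X⊗̂_πY). -/

import Mathlib

open MeasureTheory Metric Set Filter TopologicalSpace

noncomputable section

variable {𝕜 : Type*} [RCLike 𝕜]
variable {X : Type*} [NormedAddCommGroup X] [NormedSpace 𝕜 X]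
variable {Y : Type*} [NormedAddCommGroup Y] [NormedSpace 𝕜 Y]
variable {T : Type*} [NormedAddCommGroup T] [NormedSpace 𝕜 T]
variable [NormedSpace ℝ T] [IsScalarTower ℝ 𝕜 T]

/-- `T`, together with the continuous bilinear map `tmul`, is a realization of the
projective tensor product `X ⊗̂_π Y`: it is complete, the span of elementary tensors
`x ⊗ y = tmul x y` is dense, and on that span the norm is the projective norm. -/
structure IsProjTensor (tmul : X →L[𝕜] Y →L[𝕜] T) : Prop where
  complete : CompleteSpace T
  dense_span :
    Dense ((Submodule.span 𝕜 (Set.range fun p : X × Y => tmul p.1 p.2) : Submodule 𝕜 T) : Set T)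
  norm_eq : ∀ z : T,
    z ∈ Submodule.span 𝕜 (Set.range fun p : X × Y => tmul p.1 p.2) →
    ‖z‖ = sInf { c : ℝ | ∃ (m : ℕ) (x : Fin m → X) (y : Fin m → Y),
      z = ∑ i, tmul (x i) (y i) ∧ c = ∑ i, ‖x i‖ * ‖y i‖ }

/-- `u` attains its projective norm (`u ∈ NA_π(X ⊗̂_π Y)`): it admits a representation
`u = ∑ λ_n x_n ⊗ y_n` with `x_n ∈ B_X`, `y_n ∈ B_Y`, `λ_n ≥ 0` and `∑ λ_n = ‖u‖_π`. -/
def NApi (tmul : X →L[𝕜] Y →L[𝕜] T) (u : T) : Prop :=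
  ∃ (x : ℕ → X) (y : ℕ → Y) (l : ℕ → ℝ),
    (∀ n, ‖x n‖ ≤ 1) ∧ (∀ n, ‖y n‖ ≤ 1) ∧ (∀ n, 0 ≤ l n) ∧
    HasSum (fun n => (l n : 𝕜) • tmul (x n) (y n)) u ∧ HasSum l ‖u‖

/-- `u` is finitely norm-attaining (`u ∈ FNA_π(X ⊗̂_π Y)`): it admits a finite optimal
representation `u = ∑_{k<m} x_k ⊗ y_k` with `∑_{k<m} ‖x_k‖‖y_k‖ = ‖u‖_π`. -/
def FNApi (tmul : X →L[𝕜] Y →L[𝕜] T) (u : T) : Prop :=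
  ∃ (m : ℕ) (x : Fin m → X) (y : Fin m → Y),
    u = ∑ i, tmul (x i) (y i) ∧ ∑ i, ‖x i‖ * ‖y i‖ = ‖u‖

/-- `u` is an integral projective norm-attaining tensor witnessed by `μ`: `μ` is a finite
positive Borel measure concentrated on `B_X × B_Y`, the map `(x, y) ↦ x ⊗ y` is
`μ`-Bochner integrable, `u = ∫ x ⊗ y ∂μ` and `‖μ‖ = ‖u‖_π`. -/
def INApiWitness [MeasurableSpace X] [MeasurableSpace Y]
    (tmul : X →L[𝕜] Y →L[𝕜] T) (u : T) (μ : Measure (X × Y)) : Prop :=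
  IsFiniteMeasure μ ∧
  μ ((closedBall (0 : X) 1 ×ˢ closedBall (0 : Y) 1)ᶜ) = 0 ∧
  Integrable (fun p : X × Y => tmul p.1 p.2) μ ∧
  u = ∫ p, tmul p.1 p.2 ∂μ ∧
  (μ Set.univ).toReal = ‖u‖

/-- `u ∈ INA_π(X ⊗̂_π Y)`: `u` is an integral projective norm-attaining tensor. -/
def INApi [MeasurableSpace X] [MeasurableSpace Y]
    (tmul : X →L[𝕜] Y →L[𝕜] T) (u : T) : Prop :=
  ∃ μ : Measure (X × Y), INApiWitness tmul u μ


/-- Truncating the coefficients of an optimal series representation preserves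
projective norm attainment. -/
theorem stmt_2 [CompleteSpace X] [CompleteSpace Y]
    (tmul : X →L[𝕜] Y →L[𝕜] T) (hT : IsProjTensor tmul)
    (u : T) (x : ℕ → X) (y : ℕ → Y) (a : ℕ → ℝ)
    (hx : ∀ n, ‖x n‖ ≤ 1) (hy : ∀ n, ‖y n‖ ≤ 1) (ha : ∀ n, 0 ≤ a n)
    (hrep : HasSum (fun n => (a n : 𝕜) • tmul (x n) (y n)) u)
    (hopt : HasSum a ‖u‖)
    (a' : ℕ → ℝ) (ha' : ∀ n, a' n ∈ Set.Icc 0 (a n)) :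
    ∃ u' : T, HasSum (fun n => (a' n : 𝕜) • tmul (x n) (y n)) u' ∧ NApi tmul u' := by
  haveI := hT.complete
  have key : ∀ (p : X) (q : Y), ‖tmul p q‖ ≤ ‖p‖ * ‖q‖ := by
    intro p q
    have hmem : tmul p q ∈ Submodule.span 𝕜 (Set.range fun p : X × Y => tmul p.1 p.2) :=
      Submodule.subset_span ⟨(p, q), rfl⟩
    rw [hT.norm_eq _ hmem]
    apply csInf_le
    · refine ⟨0, ?_⟩
      rintro c ⟨m, xs, ys, -, rfl⟩
      positivity
    · exact ⟨1, ![p], ![q], by simp, by simp⟩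
  have hasum : Summable a := hopt.summable
  have ha'0 : ∀ n, 0 ≤ a' n := fun n => (ha' n).1
  have ha'le : ∀ n, a' n ≤ a n := fun n => (ha' n).2
  have ha'sum : Summable a' := hasum.of_nonneg_of_le ha'0 ha'le
  have hbnd : ∀ (c : ℝ), 0 ≤ c → ∀ n, ‖(c : 𝕜) • tmul (x n) (y n)‖ ≤ c := by
    intro c hc n
    rw [norm_smul, RCLike.norm_ofReal, abs_of_nonneg hc]
    calc c * ‖tmul (x n) (y n)‖ ≤ c * (‖x n‖ * ‖y n‖) :=
          mul_le_mul_of_nonneg_left (key _ _) hc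
      _ ≤ c * (1 * 1) :=
          mul_le_mul_of_nonneg_left
            (mul_le_mul (hx n) (hy n) (norm_nonneg _) zero_le_one) hc
      _ = c := by ring
  have hsummable : Summable (fun n => (a' n : 𝕜) • tmul (x n) (y n)) :=
    Summable.of_norm_bounded ha'sum (fun n => hbnd _ (ha'0 n) n)
  set u' : T := ∑' n, (a' n : 𝕜) • tmul (x n) (y n) with hu'
  have h' : HasSum (fun n => (a' n : 𝕜) • tmul (x n) (y n)) u' := hsummable.hasSum
  refine ⟨u', h', x, y, a', hx, hy, ha'0, ?_⟩
  -- remains: HasSum (fun n => (a' n : 𝕜) • tmul (x n) (y n)) u' ∧ HasSum a' ‖u'‖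
  have hdsum : Summable (fun n => a n - a' n) := hasum.sub ha'sum
  have hdiff : HasSum (fun n => ((a n - a' n : ℝ) : 𝕜) • tmul (x n) (y n)) (u - u') := by
    have h := hrep.sub h'
    simp only [← sub_smul] at h
    push_cast
    exact h
  have hub : ‖u'‖ ≤ ∑' n, a' n :=
    tsum_of_norm_bounded ha'sum.hasSum (fun n => hbnd _ (ha'0 n) n)
  have hub2 : ‖u - u'‖ ≤ ∑' n, (a n - a' n) := by
    rw [← hdiff.tsum_eq]
    exact tsum_of_norm_bounded hdsum.hasSum (fun n => hbnd _ (sub_nonneg.2 (ha'le n)) n)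
  have hsplit : (∑' n, a' n) + (∑' n, (a n - a' n)) = ∑' n, a n := by
    rw [← Summable.tsum_add ha'sum hdsum]
    exact tsum_congr fun n => by ring
  have htri : ‖u‖ ≤ ‖u'‖ + ‖u - u'‖ := by
    calc ‖u‖ = ‖u' + (u - u')‖ := by rw [add_sub_cancel]
      _ ≤ ‖u'‖ + ‖u - u'‖ := norm_add_le _ _
  have hua : ‖u‖ = ∑' n, a n := hopt.tsum_eq.symm
  have hlb : (∑' n, a' n) ≤ ‖u'‖ := by
    have := htri
    rw [hua] at this
    linarith
  have hfin : HasSum a' ‖u'‖ := by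
    rw [← le_antisymm hlb hub]
    exact ha'sum.hasSum
  exact ⟨h', hfin⟩
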